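/- Let f : ℝ → [0,∞) be an upper semi-continuous log-concave probability density supported in (-∞, a] for some a > 0, with mean zero and variance one. Then a > 1/4. -/

import Mathlib

open MeasureTheory Real Set

private lemma gammaMomentOn (n : ℕ) :
    IntegrableOn (fun t : ℝ => t ^ n * Real.exp (-t)) (Ioi 0) := by
  have h1 : (0:ℝ) < (n:ℝ) + 1 := by positivity
  have h := Real.GammaIntegral_convergent h1
  refine (h.congr_fun ?_ measurableSet_Ioi)
  intro x hx
  dsimp only
  rw [add_sub_cancel_right, Real.rpow_natCast, mul_comm]

private lemma gammaMomentVal (n : ℕ) :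
    ∫ t in Ioi (0:ℝ), t ^ n * Real.exp (-t) = (Nat.factorial n : ℝ) := by
  have h1 : (0:ℝ) < (n:ℝ) + 1 := by positivity
  have h := Real.Gamma_eq_integral h1
  rw [Real.Gamma_nat_eq_factorial] at h
  rw [h]
  refine setIntegral_congr_fun measurableSet_Ioi ?_
  intro x hx
  dsimp only
  rw [add_sub_cancel_right, Real.rpow_natCast, mul_comm]

private lemma indicator_moment (a : ℝ) (ha : 0 < a) (Q : ℝ → ℝ)
    (hQ : IntegrableOn (fun t => Q t * Real.exp (-t)) (Ioi (0:ℝ))) :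
    Integrable (fun x => a⁻¹ * ((Ici (0:ℝ)).indicator (fun t => Q t * Real.exp (-t)) (a⁻¹ * (a - x)))) ∧
    ∫ x, a⁻¹ * ((Ici (0:ℝ)).indicator (fun t => Q t * Real.exp (-t)) (a⁻¹ * (a - x)))
      = ∫ t in Ioi (0:ℝ), Q t * Real.exp (-t) := by
  set D : ℝ → ℝ := (Ici (0:ℝ)).indicator (fun t => Q t * Real.exp (-t)) with hD
  have hDint : Integrable D := by
    rw [hD, integrable_indicator_iff measurableSet_Ici, integrableOn_Ici_iff_integrableOn_Ioi]
    exact hQ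
  have h1 : Integrable (fun y => D (a⁻¹ * y)) :=
    hDint.comp_mul_left' (inv_ne_zero ha.ne')
  have h2 : Integrable (fun x => D (a⁻¹ * (a - x))) := h1.comp_sub_left a
  refine ⟨h2.const_mul _, ?_⟩
  rw [integral_const_mul]
  have h3 : ∫ x, D (a⁻¹ * (a - x)) = ∫ y, D (a⁻¹ * y) :=
    integral_sub_left_eq_self (fun y => D (a⁻¹ * y)) volume a
  rw [h3, Measure.integral_comp_inv_mul_left D a, smul_eq_mul]
  rw [hD, integral_indicator measurableSet_Ici, integral_Ici_eq_integral_Ioi]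
  rw [abs_of_pos ha]
  field_simp

private lemma E_pointwise (a : ℝ) (ha : 0 < a) (n : ℕ) (x : ℝ) :
    x ^ n * (Iic a).indicator (fun y => a⁻¹ * Real.exp ((y - a)/a)) x
      = a⁻¹ * ((Ici (0:ℝ)).indicator (fun t => (a - a*t)^n * Real.exp (-t)) (a⁻¹ * (a - x))) := by
  by_cases hx : x ≤ a
  · have ht : a⁻¹ * (a - x) ∈ Ici (0:ℝ) :=
      mul_nonneg (inv_nonneg.2 ha.le) (by linarith)
    rw [indicator_of_mem (mem_Iic.2 hx), indicator_of_mem ht]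
    have h1 : a - a * (a⁻¹ * (a - x)) = x := by field_simp; ring
    have h2 : -(a⁻¹ * (a - x)) = (x - a)/a := by field_simp; ring
    rw [h1, h2]
    ring
  · have ht : a⁻¹ * (a - x) ∉ Ici (0:ℝ) := by
      simp only [mem_Ici, not_le]
      exact mul_neg_of_pos_of_neg (inv_pos.2 ha) (by linarith [lt_of_not_ge hx])
    rw [indicator_of_notMem (by simpa using lt_of_not_ge hx), indicator_of_notMem ht]
    ring

private lemma Emoment (a : ℝ) (ha : 0 < a) (n : ℕ)
    (hQ : IntegrableOn (fun t => (a - a*t)^n * Real.exp (-t)) (Ioi (0:ℝ))) :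
    Integrable (fun x => x ^ n * (Iic a).indicator (fun y => a⁻¹ * Real.exp ((y - a)/a)) x) ∧
    ∫ x, x ^ n * (Iic a).indicator (fun y => a⁻¹ * Real.exp ((y - a)/a)) x
      = ∫ t in Ioi (0:ℝ), (a - a*t)^n * Real.exp (-t) := by
  have h := indicator_moment a ha (fun t => (a - a*t)^n) hQ
  have he : (fun x => x ^ n * (Iic a).indicator (fun y => a⁻¹ * Real.exp ((y - a)/a)) x)
      = fun x => a⁻¹ * ((Ici (0:ℝ)).indicator (fun t => (a - a*t)^n * Real.exp (-t)) (a⁻¹ * (a - x))) := by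
    funext x; exact E_pointwise a ha n x
  rw [he]
  exact h
theorem logconcave_support_bound (f : ℝ → ℝ) (a : ℝ) (ha : 0 < a)
    (hf_nonneg : ∀ x, 0 ≤ f x)
    (hf_usc : UpperSemicontinuous f)
    (hf_lc : ∀ x y a' b : ℝ, 0 ≤ a' → 0 ≤ b → a' + b = 1 →
      f x ^ a' * f y ^ b ≤ f (a' * x + b * y))
    (hf_int : ∫ x, f x = 1)
    (hf_mean : ∫ x, x * f x = 0)
    (hf_var : ∫ x, x ^ 2 * f x = 1)
    (hf_supp : ∀ x, a < x → f x = 0) :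
    1 / 4 < a := by
  classical
  -- integrability of f and its moments
  have hfm : Measurable f := hf_usc.measurable
  have hintf : Integrable f := by
    by_contra hc
    rw [integral_undef hc] at hf_int; norm_num at hf_int
  have hix2f : Integrable (fun x => x ^ 2 * f x) := by
    by_contra hc
    rw [integral_undef hc] at hf_var; norm_num at hf_var
  have hixf : Integrable (fun x => x * f x) := by
    refine Integrable.mono' (hintf.add hix2f)
      ((measurable_id.mul hfm).aestronglyMeasurable)
      (Filter.Eventually.of_forall fun x => ?_)
    have h0 : 0 ≤ f x := hf_nonneg x
    have h1 : ‖x * f x‖ = |x| * f x := by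
      rw [Real.norm_eq_abs, abs_mul, abs_of_nonneg h0]
    rw [h1]
    have h2 : |x| ≤ 1 + x ^ 2 := by nlinarith [sq_abs x, abs_nonneg x, sq_nonneg (|x| - 1)]
    have : |x| * f x ≤ (1 + x ^ 2) * f x := mul_le_mul_of_nonneg_right h2 h0
    simpa [add_mul] using this
  -- the comparison exponential density
  set E : ℝ → ℝ := (Iic a).indicator (fun y => a⁻¹ * Real.exp ((y - a)/a)) with hEdef
  -- its moments
  have he0 : (fun t : ℝ => (a - a*t) ^ 0 * Real.exp (-t)) = (fun t : ℝ => t ^ 0 * Real.exp (-t)) := by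
    funext t; simp
  have hQ0i : IntegrableOn (fun t : ℝ => (a - a*t) ^ 0 * Real.exp (-t)) (Ioi (0:ℝ)) := by
    rw [he0]; exact gammaMomentOn 0
  have hQ0v : ∫ t in Ioi (0:ℝ), (a - a*t) ^ 0 * Real.exp (-t) = 1 := by
    rw [he0, gammaMomentVal 0]; norm_num [Nat.factorial]
  have he1 : (fun t : ℝ => (a - a*t) ^ 1 * Real.exp (-t))
      = (fun t : ℝ => a * (t ^ 0 * Real.exp (-t)) - a * (t ^ 1 * Real.exp (-t))) := by
    funext t; ring
  have hQ1i : IntegrableOn (fun t : ℝ => (a - a*t) ^ 1 * Real.exp (-t)) (Ioi (0:ℝ)) := by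
    rw [he1]; exact ((gammaMomentOn 0).const_mul a).sub ((gammaMomentOn 1).const_mul a)
  have i0 : IntegrableOn (fun t : ℝ => a * (t ^ 0 * Real.exp (-t))) (Ioi 0) :=
    (gammaMomentOn 0).const_mul a
  have i1 : IntegrableOn (fun t : ℝ => a * (t ^ 1 * Real.exp (-t))) (Ioi 0) :=
    (gammaMomentOn 1).const_mul a
  have hQ1v : ∫ t in Ioi (0:ℝ), (a - a*t) ^ 1 * Real.exp (-t) = 0 := by
    rw [he1, integral_sub i0 i1,
      integral_const_mul, integral_const_mul, gammaMomentVal 0, gammaMomentVal 1]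
    norm_num [Nat.factorial]
  have he2 : (fun t : ℝ => (a - a*t) ^ 2 * Real.exp (-t))
      = (fun t : ℝ => (a ^ 2) * (t ^ 0 * Real.exp (-t)) - (2 * a ^ 2) * (t ^ 1 * Real.exp (-t))
          + (a ^ 2) * (t ^ 2 * Real.exp (-t))) := by
    funext t; ring
  have hQ2i : IntegrableOn (fun t : ℝ => (a - a*t) ^ 2 * Real.exp (-t)) (Ioi (0:ℝ)) := by
    rw [he2]
    exact (((gammaMomentOn 0).const_mul _).sub ((gammaMomentOn 1).const_mul _)).add
      ((gammaMomentOn 2).const_mul _)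
  have j0 : IntegrableOn (fun t : ℝ => a ^ 2 * (t ^ 0 * Real.exp (-t))) (Ioi 0) :=
    (gammaMomentOn 0).const_mul _
  have j1 : IntegrableOn (fun t : ℝ => 2 * a ^ 2 * (t ^ 1 * Real.exp (-t))) (Ioi 0) :=
    (gammaMomentOn 1).const_mul _
  have j2 : IntegrableOn (fun t : ℝ => a ^ 2 * (t ^ 2 * Real.exp (-t))) (Ioi 0) :=
    (gammaMomentOn 2).const_mul _
  have j01 : IntegrableOn
      (fun t : ℝ => a ^ 2 * (t ^ 0 * Real.exp (-t)) - 2 * a ^ 2 * (t ^ 1 * Real.exp (-t)))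
      (Ioi 0) := j0.sub j1
  have hQ2v : ∫ t in Ioi (0:ℝ), (a - a*t) ^ 2 * Real.exp (-t) = a ^ 2 := by
    rw [he2, integral_add j01 j2, integral_sub j0 j1,
      integral_const_mul, integral_const_mul, integral_const_mul,
      gammaMomentVal 0, gammaMomentVal 1, gammaMomentVal 2]
    norm_num [Nat.factorial]
    ring
  have hE0 := Emoment a ha 0 hQ0i
  have hE1 := Emoment a ha 1 hQ1i
  have hE2 := Emoment a ha 2 hQ2i
  rw [← hEdef] at hE0 hE1 hE2
  have hEint : Integrable E := by
    have := hE0.1; simpa using this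
  have hEv : ∫ x, E x = 1 := by
    have := hE0.2; rw [hQ0v] at this; simpa using this
  have hExi : Integrable (fun x => x * E x) := by
    have := hE1.1; simpa using this
  have hExv : ∫ x, x * E x = 0 := by
    have := hE1.2; rw [hQ1v] at this; simpa using this
  have hEx2i : Integrable (fun x => x ^ 2 * E x) := hE2.1
  have hEx2v : ∫ x, x ^ 2 * E x = a ^ 2 := by rw [hE2.2, hQ2v]
  -- nonnegativity of E
  have hEnn : ∀ x, 0 ≤ E x := by
    intro x
    rw [hEdef]
    exact indicator_nonneg (fun y _ => mul_nonneg (inv_nonneg.2 ha.le) (Real.exp_pos _).le) x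
  -- the set where f beats E
  set U : Set ℝ := {x | E x < f x} with hUdef
  have hUsub : U ⊆ Iic a := by
    intro x hx
    by_contra hxa
    have hax : a < x := lt_of_not_ge (by simpa using hxa)
    have h1 : f x = 0 := hf_supp x hax
    have h2 : E x = 0 := by
      rw [hEdef]; exact indicator_of_notMem (by simpa using hax) _
    have : E x < f x := hx
    rw [h1, h2] at this; exact lt_irrefl 0 this
  -- convexity of U
  have hconv : ∀ x ∈ U, ∀ y ∈ U, ∀ l m : ℝ, 0 ≤ l → 0 ≤ m → l + m = 1 → l * x + m * y ∈ U := by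
    intro x hx y hy l m hl hm hlm
    rcases eq_or_lt_of_le hl with h0 | hl'
    · have hm1 : m = 1 := by linarith
      have hz : l * x + m * y = y := by rw [← h0, hm1]; ring
      show E (l * x + m * y) < f (l * x + m * y)
      rw [hz]; exact hy
    rcases eq_or_lt_of_le hm with h0' | hm'
    · have hl1 : l = 1 := by linarith
      have hz : l * x + m * y = x := by rw [← h0', hl1]; ring
      show E (l * x + m * y) < f (l * x + m * y)
      rw [hz]; exact hx
    have hm2 : m = 1 - l := by linarith
    subst hm2
    have hxa : x ≤ a := hUsub hx
    have hya : y ≤ a := hUsub hy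
    have hza : l * x + (1 - l) * y ≤ a := by nlinarith
    have hexp : ∀ u : ℝ, u ≤ a →
        E u = Real.exp ((u - a)/a - Real.log a) := by
      intro u hu
      rw [hEdef]
      rw [indicator_of_mem (mem_Iic.2 hu)]
      have h3 : a⁻¹ = Real.exp (-Real.log a) := by rw [Real.exp_neg, Real.exp_log ha]
      rw [h3, ← Real.exp_add]
      congr 1; ring
    have hrp : ∀ u c : ℝ, (Real.exp u) ^ c = Real.exp (u * c) := by
      intro u c
      rw [Real.rpow_def_of_pos (Real.exp_pos u), Real.log_exp]
    have hExy : E x < f x := hx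
    have hEyy : E y < f y := hy
    show E (l * x + (1 - l) * y) < f (l * x + (1 - l) * y)
    calc E (l * x + (1 - l) * y) = (E x) ^ l * (E y) ^ (1 - l) := by
          rw [hexp _ hxa, hexp _ hya, hexp _ hza, hrp, hrp, ← Real.exp_add]
          congr 1
          field_simp
          ring
      _ < (f x) ^ l * (f y) ^ (1 - l) :=
          mul_lt_mul'' (Real.rpow_lt_rpow (hEnn x) hExy hl')
            (Real.rpow_lt_rpow (hEnn y) hEyy hm')
            (Real.rpow_nonneg (hEnn x) l) (Real.rpow_nonneg (hEnn y) (1 - l))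
      _ ≤ f (l * x + (1 - l) * y) := hf_lc x y l (1 - l) hl (by linarith) (by ring)
  -- key conclusion : 1 ≤ a ^ 2
  have hkey : (1:ℝ) ≤ a ^ 2 := by
    rcases eq_empty_or_nonempty U with hU | hU
    · -- f ≤ E everywhere
      have hle : ∀ x, f x ≤ E x := by
        intro x
        by_contra hc
        have : x ∈ U := lt_of_not_ge hc
        rw [hU] at this; exact this
      have h0 : ∫ x, (E x - f x) = 0 := by
        rw [integral_sub hEint hintf, hEv, hf_int]; ring
      have hae : (fun x => E x - f x) =ᵐ[volume] 0 :=
        (integral_eq_zero_iff_of_nonneg (fun x => sub_nonneg.2 (hle x)) (hEint.sub hintf)).1 h0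
      have h2 : (fun x => x ^ 2 * f x) =ᵐ[volume] (fun x => x ^ 2 * E x) := by
        filter_upwards [hae] with x hx
        have : E x - f x = 0 := hx
        have hfe : f x = E x := by linarith
        rw [hfe]
      have : (1:ℝ) = a ^ 2 := by rw [← hf_var, integral_congr_ae h2, hEx2v]
      linarith
    · have hba : BddAbove U := ⟨a, fun x hx => hUsub hx⟩
      by_cases hbb : BddBelow U
      · set c1 := sInf U with hc1
        set c2 := sSup U with hc2
        have hc12 : c1 ≤ c2 := csInf_le_csSup hU hbb hba
        have hpt : ∀ x, (x - c1) * (x - c2) * (f x - E x) ≤ 0 := by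
          intro x
          by_cases hx : x ∈ U
          · have h1 : c1 ≤ x := csInf_le hbb hx
            have h2 : x ≤ c2 := le_csSup hba hx
            have h3 : 0 ≤ f x - E x := le_of_lt (sub_pos.2 hx)
            have h5 : (x - c1) * (x - c2) ≤ 0 :=
              mul_nonpos_of_nonneg_of_nonpos (by linarith) (by linarith)
            exact mul_nonpos_of_nonpos_of_nonneg h5 h3
          · have h3 : f x - E x ≤ 0 := sub_nonpos.2 (not_lt.1 hx)
            have h4 : x ≤ c1 ∨ c2 ≤ x := by
              by_contra hcon
              push_neg at hcon
              obtain ⟨hc1x, hxc2⟩ := hcon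
              obtain ⟨u, hu, hux⟩ := exists_lt_of_csInf_lt hU hc1x
              obtain ⟨v, hv, hxv⟩ := exists_lt_of_lt_csSup hU hxc2
              have hvu : 0 < v - u := by linarith
              have hl : 0 ≤ (v - x)/(v - u) := div_nonneg (by linarith) hvu.le
              have hm : 0 ≤ (x - u)/(v - u) := div_nonneg (by linarith) hvu.le
              have hlm : (v - x)/(v - u) + (x - u)/(v - u) = 1 := by
                field_simp; ring
              have hz : (v - x)/(v - u) * u + (x - u)/(v - u) * v = x := by
                field_simp; ring
              have := hconv u hu v hv _ _ hl hm hlm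
              rw [hz] at this
              exact hx this
            rcases h4 with h4 | h4
            · have h5 : 0 ≤ (x - c1) * (x - c2) := by
                nlinarith [mul_nonneg (show (0:ℝ) ≤ c1 - x by linarith)
                  (show (0:ℝ) ≤ c2 - x by linarith)]
              exact mul_nonpos_of_nonneg_of_nonpos h5 h3
            · have h5 : 0 ≤ (x - c1) * (x - c2) :=
                mul_nonneg (by linarith) (by linarith)
              exact mul_nonpos_of_nonneg_of_nonpos h5 h3
        have heq : (fun x => (x - c1) * (x - c2) * (f x - E x))
            = fun x => ((x ^ 2 * f x - (c1 + c2) * (x * f x) + (c1 * c2) * f x)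
              - (x ^ 2 * E x - (c1 + c2) * (x * E x) + (c1 * c2) * E x)) := by
          funext x; ring
        have kf1 : Integrable (fun x => (c1 + c2) * (x * f x)) := hixf.const_mul _
        have kf2 : Integrable (fun x => (c1 * c2) * f x) := hintf.const_mul _
        have kf3 : Integrable (fun x => x ^ 2 * f x - (c1 + c2) * (x * f x)) := hix2f.sub kf1
        have kE1 : Integrable (fun x => (c1 + c2) * (x * E x)) := hExi.const_mul _
        have kE2 : Integrable (fun x => (c1 * c2) * E x) := hEint.const_mul _
        have kE3 : Integrable (fun x => x ^ 2 * E x - (c1 + c2) * (x * E x)) := hEx2i.sub kE1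
        have hif : Integrable (fun x => x ^ 2 * f x - (c1 + c2) * (x * f x) + (c1 * c2) * f x) :=
          kf3.add kf2
        have hiE : Integrable (fun x => x ^ 2 * E x - (c1 + c2) * (x * E x) + (c1 * c2) * E x) :=
          kE3.add kE2
        have hval : ∫ x, (x - c1) * (x - c2) * (f x - E x) = 1 - a ^ 2 := by
          rw [heq, integral_sub hif hiE,
            integral_add kf3 kf2, integral_sub hix2f kf1,
            integral_add kE3 kE2, integral_sub hEx2i kE1,
            integral_const_mul, integral_const_mul, integral_const_mul, integral_const_mul,
            hf_var, hf_mean, hf_int, hEx2v, hExv, hEv]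
          ring
        have hnp : ∫ x, (x - c1) * (x - c2) * (f x - E x) ≤ 0 :=
          integral_nonpos fun x => hpt x
        rw [hval] at hnp
        linarith
      · set c2 := sSup U with hc2
        have hpt : ∀ x, 0 ≤ (c2 - x) * (f x - E x) := by
          intro x
          by_cases hx : x ∈ U
          · have h2 : x ≤ c2 := le_csSup hba hx
            have h3 : 0 ≤ f x - E x := le_of_lt (sub_pos.2 hx)
            exact mul_nonneg (by linarith) h3
          · have h3 : f x - E x ≤ 0 := sub_nonpos.2 (not_lt.1 hx)
            have h4 : c2 ≤ x := by
              by_contra hcon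
              push_neg at hcon
              obtain ⟨v, hv, hxv⟩ := exists_lt_of_lt_csSup hU hcon
              obtain ⟨u, hu, hux⟩ := not_bddBelow_iff.1 hbb x
              have hvu : 0 < v - u := by linarith
              have hl : 0 ≤ (v - x)/(v - u) := div_nonneg (by linarith) hvu.le
              have hm : 0 ≤ (x - u)/(v - u) := div_nonneg (by linarith) hvu.le
              have hlm : (v - x)/(v - u) + (x - u)/(v - u) = 1 := by
                field_simp; ring
              have hz : (v - x)/(v - u) * u + (x - u)/(v - u) * v = x := by
                field_simp; ring
              have := hconv u hu v hv _ _ hl hm hlm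
              rw [hz] at this
              exact hx this
            nlinarith [mul_nonneg (show (0:ℝ) ≤ x - c2 by linarith)
              (show (0:ℝ) ≤ E x - f x by linarith)]
        have heq : (fun x => (c2 - x) * (f x - E x))
            = fun x => ((c2 * f x - x * f x) - (c2 * E x - x * E x)) := by
          funext x; ring
        have m1 : Integrable (fun x => c2 * f x) := hintf.const_mul _
        have m2 : Integrable (fun x => c2 * E x) := hEint.const_mul _
        have m3 : Integrable (fun x => c2 * f x - x * f x) := m1.sub hixf
        have m4 : Integrable (fun x => c2 * E x - x * E x) := m2.sub hExi
        have hiq : Integrable (fun x => (c2 - x) * (f x - E x)) := by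
          rw [heq]
          exact m3.sub m4
        have hval : ∫ x, (c2 - x) * (f x - E x) = 0 := by
          rw [heq, integral_sub m3 m4,
            integral_sub m1 hixf, integral_sub m2 hExi,
            integral_const_mul, integral_const_mul, hf_int, hf_mean, hEv, hExv]
          ring
        have hae : (fun x => (c2 - x) * (f x - E x)) =ᵐ[volume] 0 :=
          (integral_eq_zero_iff_of_nonneg (fun x => hpt x) hiq).1 hval
        have hne : ∀ᵐ x : ℝ, x ≠ c2 := by
          rw [ae_iff]
          have : {x : ℝ | ¬ x ≠ c2} = {c2} := by ext z; simp
          rw [this]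
          exact measure_singleton c2
        have h2 : (fun x => x ^ 2 * f x) =ᵐ[volume] (fun x => x ^ 2 * E x) := by
          filter_upwards [hae, hne] with x h1 hx2
          have h1' : (c2 - x) * (f x - E x) = 0 := h1
          have hfe : f x = E x := by
            rcases mul_eq_zero.1 h1' with h | h
            · exact absurd (by linarith : x = c2) hx2
            · linarith
          rw [hfe]
        have : (1:ℝ) = a ^ 2 := by rw [← hf_var, integral_congr_ae h2, hEx2v]
        linarith
  nlinarith
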